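/- arXiv:1108.4710 — 9 statements merged into one kernel-verified Lean document; each statement's English description precedes it below -/
import Mathlib

section
/- If there exists x ∈ X with ω-limit set ωf(x) = X, then for every pair of nonempty open sets U,V ⊆ X, the set N₊(U,V) = {k ∈ ℕ : f^k(U) ∩ V ≠ ∅} is infinite. -/
/-- If `ωf(x) = X` for some `x`, then for every pair of nonempty open sets
`U, V` the set `N₊(U,V) = {k : ℕ | f^[k] '' U ∩ V ≠ ∅}` is infinite. -/
theorem stmt_1 {X : Type*} [TopologicalSpace X] (f : X → X) (hf : Continuous f)
    (x : X)
    (hx : (⋂ n : ℕ, closure {y | ∃ k, n ≤ k ∧ f^[k] x = y}) = Set.univ) :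
    ∀ U V : Set X, IsOpen U → U.Nonempty → IsOpen V → V.Nonempty →
      {k : ℕ | (f^[k] '' U ∩ V).Nonempty}.Infinite := by
  have dense : ∀ (n : ℕ) (W : Set X), IsOpen W → W.Nonempty →
      ∃ k, n ≤ k ∧ f^[k] x ∈ W := by
    intro n W hW hWne
    obtain ⟨w, hw⟩ := hWne
    have hcl : w ∈ closure {y | ∃ k, n ≤ k ∧ f^[k] x = y} := by
      have : w ∈ ⋂ n : ℕ, closure {y | ∃ k, n ≤ k ∧ f^[k] x = y} := by
        rw [hx]; trivial
      exact Set.mem_iInter.mp this n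
    obtain ⟨y, hyW, k, hkn, hky⟩ := mem_closure_iff.mp hcl W hW hw
    exact ⟨k, hkn, hky ▸ hyW⟩
  intro U V hU hUne hV hVne
  obtain ⟨m, -, hmU⟩ := dense 0 U hU hUne
  apply Set.infinite_of_not_bddAbove
  rintro ⟨b, hb⟩
  obtain ⟨k, hk, hkV⟩ := dense (b + 1 + m) V hV hVne
  have hmem : k - m ∈ {k : ℕ | (f^[k] '' U ∩ V).Nonempty} := by
    refine ⟨f^[k] x, ⟨f^[m] x, hmU, ?_⟩, hkV⟩
    rw [← Function.iterate_add_apply]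
    congr 1
    omega
  have := hb hmem
  omega
end

section
/- If X is a perfect Hausdorff space and (X,f) is topologically transitive, then for every nonempty open U ⊆ X, the set N₊(U,U) = {k ∈ ℕ : f^k(U) ∩ U ≠ ∅} is infinite. -/
/-- If `X` is perfect Hausdorff and `(X,f)` is topologically transitive, then
for every nonempty open `U` the set `N₊(U,U)` is infinite. -/
theorem stmt_9 {X : Type*} [TopologicalSpace X] [T2Space X]
    (hperf : ∀ x : X, ¬ IsOpen ({x} : Set X))
    (f : X → X) (hf : Continuous f)
    (hTT : ∀ U V : Set X, IsOpen U → U.Nonempty → IsOpen V → V.Nonempty →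
      ∃ k : ℕ, (f^[k] '' U ∩ V).Nonempty ∨ (f^[k] '' V ∩ U).Nonempty) :
    ∀ U : Set X, IsOpen U → U.Nonempty →
      {k : ℕ | (f^[k] '' U ∩ U).Nonempty}.Infinite := by
  intro U hU hUne
  -- Lemma A: every nonempty open set has a positive return time.
  have lemA : ∀ A : Set X, IsOpen A → A.Nonempty →
      ∃ j, 1 ≤ j ∧ ∃ y ∈ A, f^[j] y ∈ A := by
    intro A hA hAne
    obtain ⟨x, hx⟩ := hAne
    have hA2 : ∃ y ∈ A, y ≠ x := by
      by_contra h
      push_neg at h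
      have : A = {x} := Set.eq_singleton_iff_unique_mem.2 ⟨hx, h⟩
      exact hperf x (this ▸ hA)
    obtain ⟨y, hy, hyx⟩ := hA2
    obtain ⟨V, W, hV, hW, hxV, hyW, hVW⟩ := t2_separation hyx.symm
    have hV'open : IsOpen (A ∩ V) := hA.inter hV
    have hW'open : IsOpen (A ∩ W) := hA.inter hW
    have hV'ne : (A ∩ V).Nonempty := ⟨x, hx, hxV⟩
    have hW'ne : (A ∩ W).Nonempty := ⟨y, hy, hyW⟩
    have hdisj : (A ∩ V) ∩ (A ∩ W) = ∅ := by
      rw [Set.eq_empty_iff_forall_notMem]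
      rintro z ⟨⟨-, hzV⟩, ⟨-, hzW⟩⟩
      exact hVW.ne_of_mem hzV hzW rfl
    obtain ⟨k, hk⟩ := hTT (A ∩ V) (A ∩ W) hV'open hV'ne hW'open hW'ne
    have hkpos : 1 ≤ k := by
      rcases Nat.eq_zero_or_pos k with rfl | h
      · exfalso
        rcases hk with ⟨z, hz1, hz2⟩ | ⟨z, hz1, hz2⟩ <;>
          simp only [Function.iterate_zero, Set.image_id] at hz1
        · exact absurd ⟨hz1, hz2⟩ (hdisj ▸ Set.notMem_empty z)
        · exact absurd ⟨hz2, hz1⟩ (hdisj ▸ Set.notMem_empty z)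
      · exact h
    rcases hk with ⟨z, ⟨w, hw, rfl⟩, hz2⟩ | ⟨z, ⟨w, hw, rfl⟩, hz2⟩
    · exact ⟨k, hkpos, w, hw.1, hz2.1⟩
    · exact ⟨k, hkpos, w, hw.1, hz2.1⟩
  -- arbitrarily large return times for U
  have key : ∀ n : ℕ, ∃ k, n ≤ k ∧ (f^[k] '' U ∩ U).Nonempty := by
    intro n
    induction n with
    | zero => exact ⟨0, le_refl 0, by simpa using hUne⟩
    | succ n ih =>
      obtain ⟨k, hk, z, ⟨x, hxU, rfl⟩, hxU'⟩ := ih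
      have hAopen : IsOpen (U ∩ f^[k] ⁻¹' U) :=
        hU.inter ((hf.iterate k).isOpen_preimage _ hU)
      have hAne : (U ∩ f^[k] ⁻¹' U).Nonempty := ⟨x, hxU, hxU'⟩
      obtain ⟨j, hj1, y, hyA, hyA'⟩ := lemA _ hAopen hAne
      refine ⟨k + j, by omega, f^[k + j] y, ⟨y, hyA.1, rfl⟩, ?_⟩
      rw [Function.iterate_add_apply]
      exact hyA'.2
  -- conclude infiniteness
  by_contra hfin
  rw [Set.not_infinite] at hfin
  obtain ⟨m, hm⟩ := hfin.bddAbove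
  obtain ⟨k, hk, hkmem⟩ := key (m + 1)
  exact absurd (hm hkmem) (by omega)
end

section
/- If X is a perfect Hausdorff space and (X,f) is topologically transitive, then for all nonempty open U,V ⊆ X the set N₊(U,V) = {k ∈ ℕ : f^k(U) ∩ V ≠ ∅} is infinite (i.e., TT implies TT₊₊). -/
/-- TT implies TT₊₊ on a perfect Hausdorff space: for all nonempty open
`U, V` the set `N₊(U,V)` is infinite. -/
theorem stmt_10 {X : Type*} [TopologicalSpace X] [T2Space X]
    (hperf : ∀ x : X, ¬ IsOpen ({x} : Set X))
    (f : X → X) (hf : Continuous f)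
    (hTT : ∀ U V : Set X, IsOpen U → U.Nonempty → IsOpen V → V.Nonempty →
      ∃ k : ℕ, (f^[k] '' U ∩ V).Nonempty ∨ (f^[k] '' V ∩ U).Nonempty) :
    ∀ U V : Set X, IsOpen U → U.Nonempty → IsOpen V → V.Nonempty →
      {k : ℕ | (f^[k] '' U ∩ V).Nonempty}.Infinite := by
  -- Every nonempty open set contains two disjoint nonempty open subsets.
  have perfect : ∀ W : Set X, IsOpen W → W.Nonempty →
      ∃ W₁ W₂ : Set X, IsOpen W₁ ∧ W₁.Nonempty ∧ IsOpen W₂ ∧ W₂.Nonempty ∧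
        W₁ ⊆ W ∧ W₂ ⊆ W ∧ Disjoint W₁ W₂ := by
    rintro W hW ⟨x, hx⟩
    have hy : ∃ y ∈ W, y ≠ x := by
      by_contra h
      push_neg at h
      have hWx : W = {x} := subset_antisymm (fun y hy => h y hy) (by simpa using hx)
      exact hperf x (hWx ▸ hW)
    obtain ⟨y, hyW, hyx⟩ := hy
    obtain ⟨A, B, hA, hB, hxA, hyB, hAB⟩ := t2_separation hyx.symm
    exact ⟨W ∩ A, W ∩ B, hW.inter hA, ⟨x, hx, hxA⟩, hW.inter hB, ⟨y, hyW, hyB⟩,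
      Set.inter_subset_left, Set.inter_subset_left,
      hAB.mono Set.inter_subset_right Set.inter_subset_right⟩
  -- Return time at least 1 into any nonempty open set.
  have step : ∀ W : Set X, IsOpen W → W.Nonempty →
      ∃ k, 1 ≤ k ∧ (W ∩ f^[k] ⁻¹' W).Nonempty := by
    intro W hW hWne
    obtain ⟨W₁, W₂, h1, h1ne, h2, h2ne, hs1, hs2, hd⟩ := perfect W hW hWne
    obtain ⟨k, hk⟩ := hTT W₁ W₂ h1 h1ne h2 h2ne
    have hk1 : 1 ≤ k := by
      rcases Nat.eq_zero_or_pos k with rfl | h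
      · exfalso
        rcases hk with ⟨z, hz1, hz2⟩ | ⟨z, hz1, hz2⟩
        · simp only [Function.iterate_zero, Set.image_id] at hz1
          exact (hd.ne_of_mem hz1 hz2) rfl
        · simp only [Function.iterate_zero, Set.image_id] at hz1
          exact (hd.ne_of_mem hz2 hz1) rfl
      · exact h
    rcases hk with ⟨z, ⟨w, hw, hwz⟩, hz2⟩ | ⟨z, ⟨w, hw, hwz⟩, hz2⟩
    · exact ⟨k, hk1, w, hs1 hw, by rw [Set.mem_preimage, hwz]; exact hs2 hz2⟩
    · exact ⟨k, hk1, w, hs2 hw, by rw [Set.mem_preimage, hwz]; exact hs1 hz2⟩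
  -- Arbitrarily large return times with an open witness set.
  have lemA : ∀ n : ℕ, ∀ W : Set X, IsOpen W → W.Nonempty →
      ∃ k, n ≤ k ∧ ∃ W' : Set X, IsOpen W' ∧ W'.Nonempty ∧ W' ⊆ W ∧
        f^[k] '' W' ⊆ W := by
    intro n
    induction n with
    | zero =>
      intro W hW hWne
      exact ⟨0, le_refl _, W, hW, hWne, subset_rfl, by simp⟩
    | succ n ih =>
      intro W hW hWne
      obtain ⟨k, hk, W', hW', hW'ne, hsub, himg⟩ := ih W hW hWne
      obtain ⟨j, hj, hne⟩ := step W' hW' hW'ne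
      refine ⟨k + j, by omega, W' ∩ f^[j] ⁻¹' W',
        hW'.inter ((hW'.preimage (hf.iterate j))), hne,
        fun z hz => hsub hz.1, ?_⟩
      rintro z ⟨w, ⟨hw1, hw2⟩, rfl⟩
      have : f^[k + j] w = f^[k] (f^[j] w) := Function.iterate_add_apply f k j w
      rw [this]
      exact himg ⟨f^[j] w, hw2, rfl⟩
  -- TT₊ : each N₊(U,V) is nonempty.
  have TTp : ∀ A B : Set X, IsOpen A → A.Nonempty → IsOpen B → B.Nonempty →
      ∃ m, (f^[m] '' A ∩ B).Nonempty := by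
    intro A B hA hAne hB hBne
    obtain ⟨k, hk⟩ := hTT A B hA hAne hB hBne
    rcases hk with h | h
    · exact ⟨k, h⟩
    · obtain ⟨z, ⟨b, hb, hbz⟩, hzA⟩ := h
      set W := B ∩ f^[k] ⁻¹' A with hWdef
      have hWopen : IsOpen W := hB.inter (hA.preimage (hf.iterate k))
      have hWne : W.Nonempty := ⟨b, hb, by simp [Set.mem_preimage, hbz ▸ hzA]⟩
      obtain ⟨m, hm, W', hW', hW'ne, hsub, himg⟩ := lemA k W hWopen hWne
      obtain ⟨w, hw⟩ := hW'ne
      refine ⟨m - k, f^[m] w, ⟨f^[k] w, (hsub hw).2, ?_⟩, (himg ⟨w, hw, rfl⟩).1⟩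
      rw [← Function.iterate_add_apply f (m - k) k w, Nat.sub_add_cancel hm]
  -- Main proof.
  intro U V hU hUne hV hVne
  obtain ⟨m, z, ⟨u, hu, huz⟩, hzV⟩ := TTp U V hU hUne hV hVne
  set U' := U ∩ f^[m] ⁻¹' V with hU'def
  have hU'open : IsOpen U' := hU.inter (hV.preimage (hf.iterate m))
  have hU'ne : U'.Nonempty := ⟨u, hu, by simp [Set.mem_preimage, huz ▸ hzV]⟩
  apply Set.infinite_of_not_bddAbove
  rintro ⟨b, hb⟩
  obtain ⟨k, hk, W', hW', hW'ne, hsub, himg⟩ := lemA (b + 1) U' hU'open hU'ne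
  obtain ⟨w, hw⟩ := hW'ne
  have hmem : k + m ∈ {k : ℕ | (f^[k] '' U ∩ V).Nonempty} := by
    refine ⟨f^[k + m] w, ⟨w, (hsub hw).1, rfl⟩, ?_⟩
    have h1 : f^[k + m] w = f^[m] (f^[k] w) := by
      rw [Nat.add_comm, Function.iterate_add_apply]
    rw [h1]
    exact (himg ⟨w, hw, rfl⟩).2
  have := hb hmem
  omega
end

section
/- If (X,f) is topologically transitive and A ⊆ X is +invariant, then the interior of f^{-1}(A) \ A is either empty or a single isolated point. -/
/-- For a topologically transitive system and a +invariant set `A`, the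
interior of `f⁻¹(A) \ A` is empty or a single isolated point. -/
theorem stmt_11 {X : Type*} [TopologicalSpace X] [T2Space X]
    (f : X → X) (hf : Continuous f)
    (hTT : ∀ U V : Set X, IsOpen U → U.Nonempty → IsOpen V → V.Nonempty →
      ∃ k : ℕ, (f^[k] '' U ∩ V).Nonempty ∨ (f^[k] '' V ∩ U).Nonempty)
    (A : Set X) (hA : f '' A ⊆ A) :
    interior (f ⁻¹' A \ A) = ∅ ∨
      ∃ x : X, interior (f ⁻¹' A \ A) = {x} ∧ IsOpen ({x} : Set X) := by
  set W := interior (f ⁻¹' A \ A) with hWdef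
  have hWsub : W ⊆ f ⁻¹' A \ A := interior_subset
  have hinv : ∀ k : ℕ, ∀ w ∈ A, f^[k] w ∈ A := by
    intro k
    induction k with
    | zero => intro w hw; simpa using hw
    | succ n ih =>
      intro w hw
      rw [Function.iterate_succ_apply]
      exact ih _ (hA ⟨w, hw, rfl⟩)
  have hWA : ∀ k : ℕ, ∀ z ∈ W, f^[k + 1] z ∈ A := by
    intro k z hz
    rw [Function.iterate_succ_apply]
    exact hinv k _ (hWsub hz).1
  rcases Set.eq_empty_or_nonempty W with h | ⟨x, hx⟩
  · exact Or.inl h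
  · right
    have hW : W = {x} := by
      apply Set.eq_singleton_iff_unique_mem.2 ⟨hx, ?_⟩
      intro y hy
      by_contra hne
      obtain ⟨U, V, hU, hV, hyU, hxV, hUV⟩ := t2_separation hne
      have hU' : IsOpen (U ∩ W) := hU.inter isOpen_interior
      have hV' : IsOpen (V ∩ W) := hV.inter isOpen_interior
      obtain ⟨k, hk | hk⟩ := hTT (U ∩ W) (V ∩ W) hU' ⟨y, hyU, hy⟩ hV' ⟨x, hxV, hx⟩
      all_goals {
        obtain ⟨z, ⟨w, hw, rfl⟩, hz2⟩ := hk
        cases k with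
        | zero =>
          simp only [Function.iterate_zero, id] at hz2
          first
          | exact hUV.le_bot ⟨hw.1, hz2.1⟩
          | exact hUV.le_bot ⟨hz2.1, hw.1⟩
        | succ n =>
          exact (hWsub hz2.2).2 (hWA n _ hw.2)
      }
    exact ⟨x, hW, hW ▸ isOpen_interior⟩
end

section
/- If (X,f) is topologically transitive, then either f(X) is dense in X, or X \ closure(f(X)) consists of a single isolated point. In particular, if X is also perfect then f(X) is dense. -/
/-- For a topologically transitive system, either `f(X)` is dense, or its
complement's closure misses exactly one point, which is isolated; in
particular if `X` is perfect then `f(X)` is dense. -/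
theorem stmt_12 {X : Type*} [TopologicalSpace X] [T2Space X]
    (f : X → X) (hf : Continuous f)
    (hTT : ∀ U V : Set X, IsOpen U → U.Nonempty → IsOpen V → V.Nonempty →
      ∃ k : ℕ, (f^[k] '' U ∩ V).Nonempty ∨ (f^[k] '' V ∩ U).Nonempty) :
    (Dense (Set.range f) ∨
      ∃ x : X, Set.univ \ closure (Set.range f) = {x} ∧ IsOpen ({x} : Set X)) ∧
    ((∀ x : X, ¬ IsOpen ({x} : Set X)) → Dense (Set.range f)) := by
  set U : Set X := (closure (Set.range f))ᶜ with hU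
  have hUopen : IsOpen U := isClosed_closure.isOpen_compl
  have key : U.Subsingleton := by
    intro x hx y hy
    by_contra hxy
    obtain ⟨Vx, Vy, hVxo, hVyo, hxVx, hyVy, hdisj⟩ := t2_separation hxy
    obtain ⟨k, h | h⟩ := hTT (Vx ∩ U) (Vy ∩ U) (hVxo.inter hUopen) ⟨x, hxVx, hx⟩
      (hVyo.inter hUopen) ⟨y, hyVy, hy⟩
    · obtain ⟨z, ⟨w, hw, hwz⟩, hz2⟩ := h
      cases k with
      | zero =>
        simp only [Function.iterate_zero, id_eq] at hwz
        subst hwz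
        exact Set.disjoint_left.mp hdisj hw.1 hz2.1
      | succ k =>
        have hz : z ∈ Set.range f :=
          ⟨f^[k] w, by rw [← hwz, Function.iterate_succ_apply']⟩
        exact hz2.2 (subset_closure hz)
    · obtain ⟨z, ⟨w, hw, hwz⟩, hz2⟩ := h
      cases k with
      | zero =>
        simp only [Function.iterate_zero, id_eq] at hwz
        subst hwz
        exact Set.disjoint_left.mp hdisj hz2.1 hw.1
      | succ k =>
        have hz : z ∈ Set.range f :=
          ⟨f^[k] w, by rw [← hwz, Function.iterate_succ_apply']⟩
        exact hz2.2 (subset_closure hz)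
  have hmain : Dense (Set.range f) ∨
      ∃ x : X, Set.univ \ closure (Set.range f) = {x} ∧ IsOpen ({x} : Set X) := by
    by_cases hd : Dense (Set.range f)
    · exact Or.inl hd
    · right
      have hUne : U.Nonempty := by
        rw [Set.nonempty_compl]
        intro hcl
        exact hd (dense_iff_closure_eq.mpr hcl)
      obtain ⟨x, hx⟩ := hUne
      have hUeq : U = {x} :=
        Set.eq_singleton_iff_unique_mem.mpr ⟨hx, fun y hy => key hy hx⟩
      refine ⟨x, ?_, hUeq ▸ hUopen⟩
      rw [← hUeq, hU, Set.compl_eq_univ_diff]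
  refine ⟨hmain, fun hiso => ?_⟩
  rcases hmain with hd | ⟨x, _, hxo⟩
  · exact hd
  · exact absurd hxo (hiso x)
end

section
/- If (X,f) satisfies TT₊ and X is a Hausdorff space containing at least one isolated point, then X is finite and consists of a single periodic orbit. -/
/-- If `(X,f)` satisfies TT₊ and the Hausdorff space `X` has an isolated
point, then `X` is finite and is a single periodic orbit. -/
theorem stmt_15 {X : Type*} [TopologicalSpace X] [T2Space X]
    (f : X → X) (hf : Continuous f)
    (hTT : ∀ U V : Set X, IsOpen U → U.Nonempty → IsOpen V → V.Nonempty →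
      ∃ k : ℕ, (f^[k] '' U ∩ V).Nonempty)
    (hiso : ∃ x : X, IsOpen ({x} : Set X)) :
    Finite X ∧ ∃ (x : X) (n : ℕ), 0 < n ∧ f^[n] x = x ∧
      (∀ i j : ℕ, i < n → j < n → f^[i] x = f^[j] x → i = j) ∧
      ∀ y : X, ∃ i : ℕ, i < n ∧ f^[i] x = y := by
  classical
  obtain ⟨x, hx⟩ := hiso
  have hxne : ({x} : Set X).Nonempty := ⟨x, rfl⟩
  -- Step 1: x is periodic
  have hper : ∃ n, 0 < n ∧ f^[n] x = x := by
    by_cases hall : ∀ y : X, y = x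
    · refine ⟨1, one_pos, ?_⟩
      simpa using hall (f x)
    · push_neg at hall
      obtain ⟨y, hy⟩ := hall
      have hco : IsOpen ({x}ᶜ : Set X) := isClosed_singleton.isOpen_compl
      obtain ⟨k, z, ⟨u, hu, hfu⟩, hz⟩ := hTT {x}ᶜ {x} hco ⟨y, hy⟩ hx hxne
      simp only [Set.mem_singleton_iff] at hz
      simp only [Set.mem_compl_iff, Set.mem_singleton_iff] at hu
      have hk : k ≠ 0 := by
        rintro rfl
        simp only [Function.iterate_zero, id] at hfu
        exact hu (hfu.trans hz)
      have hpre : (f ⁻¹' {x}).Nonempty := by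
        refine ⟨f^[k - 1] u, ?_⟩
        simp only [Set.mem_preimage, Set.mem_singleton_iff]
        have : f^[(k - 1) + 1] u = z := by rw [Nat.sub_add_cancel (Nat.one_le_iff_ne_zero.mpr hk)]; exact hfu
        rw [Function.iterate_succ_apply'] at this
        rw [this, hz]
      obtain ⟨m, w, ⟨u', hu', hfu'⟩, hw⟩ := hTT {x} (f ⁻¹' {x}) hx hxne (hx.preimage hf) hpre
      simp only [Set.mem_singleton_iff] at hu'
      simp only [Set.mem_preimage, Set.mem_singleton_iff] at hw
      subst hu'
      refine ⟨m + 1, Nat.succ_pos _, ?_⟩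
      rw [Function.iterate_succ_apply', hfu', hw]
  set n := Nat.find hper with hn_def
  obtain ⟨hnpos, hnper⟩ := Nat.find_spec hper
  -- mod lemma
  have hmod : ∀ k, f^[k] x = f^[k % n] x := by
    intro k
    conv_lhs => rw [← Nat.div_add_mod k n, Nat.add_comm, Function.iterate_add_apply,
      Function.iterate_mul]
    rw [Function.iterate_fixed hnper]
  -- the orbit
  set S : Set X := (fun i => f^[i] x) '' Set.Iio n with hS_def
  have hSfin : S.Finite := Set.Finite.image _ (Set.finite_Iio n)
  have hSall : ∀ y : X, y ∈ S := by
    by_contra h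
    push_neg at h
    obtain ⟨y, hy⟩ := h
    have hSo : IsOpen Sᶜ := hSfin.isClosed.isOpen_compl
    obtain ⟨k, z, ⟨u, hu, hfu⟩, hz⟩ := hTT {x} Sᶜ hx hxne hSo ⟨y, hy⟩
    simp only [Set.mem_singleton_iff] at hu
    subst hu
    apply hz
    rw [← hfu, hmod k]
    exact ⟨k % n, Nat.mod_lt _ hnpos, rfl⟩
  have hfinX : Finite X := by
    have : (Set.univ : Set X).Finite := by
      have : (Set.univ : Set X) ⊆ S := fun y _ => hSall y
      exact hSfin.subset this
    exact Set.finite_univ_iff.mp this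
  -- injectivity helper
  have key : ∀ i j : ℕ, i < n → j < n → i < j → f^[i] x = f^[j] x → False := by
    intro i j hi hj hij heq
    have h1 : f^[(n - j) + i] x = x := by
      rw [Function.iterate_add_apply, heq, ← Function.iterate_add_apply,
        Nat.sub_add_cancel hj.le, hnper]
    have h2 : n - j + i < n := by omega
    exact Nat.find_min hper h2 ⟨by omega, h1⟩
  refine ⟨hfinX, x, n, hnpos, hnper, ?_, ?_⟩
  · intro i j hi hj heq
    rcases lt_trichotomy i j with h | h | h
    · exact absurd heq (fun hh => key i j hi hj h hh)
    · exact h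
    · exact absurd heq.symm (fun hh => key j i hj hi h hh)
  · intro y
    obtain ⟨i, hi, hfi⟩ := hSall y
    exact ⟨i, hi, hfi⟩
end

section
/- If (X,f) is topologically transitive on a Hausdorff space and x is an isolated point with f^{-1}({x}) containing more than one point, then x is periodic and f^{-1}({x}) consists of exactly two points. -/
/-- If `(X,f)` is topologically transitive, `x` is isolated, and `f⁻¹({x})`
has more than one point, then `x` is periodic and `f⁻¹({x})` has exactly two
points. -/
theorem stmt_16 {X : Type*} [TopologicalSpace X] [T2Space X]
    (f : X → X) (hf : Continuous f)
    (hTT : ∀ U V : Set X, IsOpen U → U.Nonempty → IsOpen V → V.Nonempty →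
      ∃ k : ℕ, (f^[k] '' U ∩ V).Nonempty ∨ (f^[k] '' V ∩ U).Nonempty)
    (x : X) (hx : IsOpen ({x} : Set X))
    (hpre : (f ⁻¹' {x}).Nontrivial) :
    (∃ n : ℕ, 0 < n ∧ f^[n] x = x) ∧
      ∃ a b : X, a ≠ b ∧ f ⁻¹' {x} = {a, b} := by
  classical
  set P : Set X := f ⁻¹' {x} with hPdef
  have hPopen : IsOpen P := hx.preimage hf
  -- auxiliary: one-sided case of the key lemma
  have main : ∀ (k : ℕ) (C D : Set X), C ⊆ P → D ⊆ P → Disjoint C D →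
      (f^[k] '' C ∩ D).Nonempty → ∃ m : ℕ, f^[m] x ∈ C ∪ D ∧ f^[m+1] x = x := by
    intro k C D hCP hDP hcd ⟨y, ⟨u, huC, hyu⟩, hyD⟩
    cases k with
    | zero =>
      simp only [Function.iterate_zero, id] at hyu
      subst hyu
      exact absurd hyD (Set.disjoint_left.mp hcd huC)
    | succ m =>
      have hu : f u = x := hCP huC
      have h1 : f^[m+1] u = f^[m] x := by
        rw [Function.iterate_succ_apply, hu]
      have h2 : f^[m] x ∈ D := by rw [← h1, hyu]; exact hyD
      have h3 : f^[m] x ∈ P := hDP h2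
      refine ⟨m, Or.inr h2, ?_⟩
      rw [Function.iterate_succ_apply']
      exact h3
  -- key lemma
  have key : ∀ A B : Set X, IsOpen A → IsOpen B → A.Nonempty → B.Nonempty →
      A ⊆ P → B ⊆ P → Disjoint A B →
      ∃ m : ℕ, f^[m] x ∈ A ∪ B ∧ f^[m+1] x = x := by
    intro A B hA hB hAn hBn hAP hBP hd
    obtain ⟨k, hk | hk⟩ := hTT A B hA hAn hB hBn
    · exact main k A B hAP hBP hd hk
    · obtain ⟨m, hm, hper⟩ := main k B A hBP hAP hd.symm hk
      exact ⟨m, (Set.union_comm B A) ▸ hm, hper⟩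
  obtain ⟨a, ha, b, hb, hab⟩ := hpre
  -- x is periodic
  obtain ⟨U1, V1, hU1, hV1, haU1, hbV1, hd1⟩ := t2_separation hab
  obtain ⟨m0, _, hper0⟩ := key (P ∩ U1) (P ∩ V1) (hPopen.inter hU1) (hPopen.inter hV1)
    ⟨a, ha, haU1⟩ ⟨b, hb, hbV1⟩ Set.inter_subset_left Set.inter_subset_left
    (hd1.mono Set.inter_subset_right Set.inter_subset_right)
  have hper0' : Function.IsPeriodicPt f (m0 + 1) x := hper0
  set n := Function.minimalPeriod f x with hn
  have hnpos : 0 < n := hper0'.minimalPeriod_pos (Nat.succ_pos m0)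
  -- uniqueness of the orbit point in P
  have key2 : ∀ i : ℕ, f^[i+1] x = x → f^[i] x = f^[n-1] x := by
    intro i hi
    have hdvd : n ∣ i + 1 :=
      Function.IsPeriodicPt.minimalPeriod_dvd (hi : Function.IsPeriodicPt f (i+1) x)
    obtain ⟨q, hq⟩ := hdvd
    match q, hq with
    | 0, hq => omega
    | q+1, hq =>
      have hq' : i + 1 = n * q + n := by rw [hq, Nat.mul_succ]
      have hieq : i = (n - 1) + n * q := by omega
      have hfix : Function.IsPeriodicPt f (n * q) x :=
        (Function.isPeriodicPt_minimalPeriod f x).mul_const q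
      rw [hieq, Function.iterate_add_apply, hfix]
  have uniq : ∀ i j : ℕ, f^[i+1] x = x → f^[j+1] x = x → f^[i] x = f^[j] x := by
    intro i j hi hj
    rw [key2 i hi, key2 j hj]
  -- P has at most two points
  have claim : ∀ p ∈ P, p = a ∨ p = b := by
    intro p hp
    by_contra hcon
    push_neg at hcon
    obtain ⟨hpa, hpb⟩ := hcon
    obtain ⟨U2, V2, hU2, hV2, haU2, hpV2, hd2⟩ := t2_separation (Ne.symm hpa)
    obtain ⟨U3, V3, hU3, hV3, hbU3, hpV3, hd3⟩ := t2_separation (Ne.symm hpb)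
    set A : Set X := P ∩ U1 ∩ U2 with hA
    set B : Set X := P ∩ V1 ∩ U3 with hB
    set C : Set X := P ∩ V2 ∩ V3 with hC
    have hAo : IsOpen A := (hPopen.inter hU1).inter hU2
    have hBo : IsOpen B := (hPopen.inter hV1).inter hU3
    have hCo : IsOpen C := (hPopen.inter hV2).inter hV3
    have hAn : A.Nonempty := ⟨a, ⟨ha, haU1⟩, haU2⟩
    have hBn : B.Nonempty := ⟨b, ⟨hb, hbV1⟩, hbU3⟩
    have hCn : C.Nonempty := ⟨p, ⟨hp, hpV2⟩, hpV3⟩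
    have hAP : A ⊆ P := fun y hy => hy.1.1
    have hBP : B ⊆ P := fun y hy => hy.1.1
    have hCP : C ⊆ P := fun y hy => hy.1.1
    have hdAB : Disjoint A B :=
      hd1.mono (fun y hy => hy.1.2) (fun y hy => hy.1.2)
    have hdAC : Disjoint A C :=
      hd2.mono (fun y hy => hy.2) (fun y hy => hy.1.2)
    have hdBC : Disjoint B C :=
      hd3.mono (fun y hy => hy.2) (fun y hy => hy.2)
    obtain ⟨m1, hm1, hp1⟩ := key A B hAo hBo hAn hBn hAP hBP hdAB
    obtain ⟨m2, hm2, hp2⟩ := key A C hAo hCo hAn hCn hAP hCP hdAC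
    obtain ⟨m3, hm3, hp3⟩ := key B C hBo hCo hBn hCn hBP hCP hdBC
    have e12 : f^[m1] x = f^[m2] x := uniq m1 m2 hp1 hp2
    have e13 : f^[m1] x = f^[m3] x := uniq m1 m3 hp1 hp3
    rw [← e12] at hm2
    rw [← e13] at hm3
    rcases hm1 with hz | hz
    · rcases hm3 with hz' | hz'
      · exact Set.disjoint_left.mp hdAB hz hz'
      · exact Set.disjoint_left.mp hdAC hz hz'
    · rcases hm2 with hz' | hz'
      · exact Set.disjoint_left.mp hdAB hz' hz
      · exact Set.disjoint_left.mp hdBC hz hz'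
  refine ⟨⟨m0 + 1, Nat.succ_pos m0, hper0⟩, a, b, hab, ?_⟩
  ext p
  constructor
  · intro hp
    rcases claim p hp with h | h <;> simp [h]
  · rintro (rfl | rfl)
    · exact ha
    · exact hb
end

section
/- If (X,f) is topologically transitive on a Hausdorff space and x is an isolated point, then every point of the backward orbit O₋(x) = ⋃_{k≥0} f^{-k}({x}) is isolated; hence the set of isolated points is open and −invariant. -/
open Set

private lemma pair_lemma_17 {X : Type*} [TopologicalSpace X] (f : X → X)
    (hTT : ∀ U V : Set X, IsOpen U → U.Nonempty → IsOpen V → V.Nonempty →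
      ∃ k : ℕ, (f^[k] '' U ∩ V).Nonempty ∨ (f^[k] '' V ∩ U).Nonempty)
    (x : X) {V₁ V₂ : Set X} (h1o : IsOpen V₁) (h1n : V₁.Nonempty)
    (h2o : IsOpen V₂) (h2n : V₂.Nonempty) (hd : Disjoint V₁ V₂)
    (hs1 : V₁ ⊆ f ⁻¹' {x}) (hs2 : V₂ ⊆ f ⁻¹' {x}) :
    ∃ n, f^[n] x ∈ V₁ ∪ V₂ := by
  obtain ⟨k, hk | hk⟩ := hTT V₁ V₂ h1o h1n h2o h2n
  · obtain ⟨w, ⟨u, hu, rfl⟩, hw2⟩ := hk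
    cases k with
    | zero =>
        simp only [Function.iterate_zero_apply] at hw2
        exact absurd rfl (hd.ne_of_mem hu hw2)
    | succ n =>
        refine ⟨n, Or.inr ?_⟩
        have hfu : f u = x := hs1 hu
        rwa [Function.iterate_succ_apply, hfu] at hw2
  · obtain ⟨w, ⟨u, hu, rfl⟩, hw1⟩ := hk
    cases k with
    | zero =>
        simp only [Function.iterate_zero_apply] at hw1
        exact absurd rfl (hd.ne_of_mem hw1 hu)
    | succ n =>
        refine ⟨n, Or.inl ?_⟩
        have hfu : f u = x := hs2 hu
        rwa [Function.iterate_succ_apply, hfu] at hw1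

private lemma key_17 {X : Type*} [TopologicalSpace X] [T2Space X]
    (f : X → X) (hf : Continuous f)
    (hTT : ∀ U V : Set X, IsOpen U → U.Nonempty → IsOpen V → V.Nonempty →
      ∃ k : ℕ, (f^[k] '' U ∩ V).Nonempty ∨ (f^[k] '' V ∩ U).Nonempty)
    (x : X) (hx : IsOpen ({x} : Set X)) (y : X) (hy : f y = x) :
    IsOpen ({y} : Set X) := by
  by_contra h
  set W : Set X := f ⁻¹' {x} with hWdef
  have hWo : IsOpen W := hx.preimage hf
  have hyW : y ∈ W := by simp [hWdef, hy]
  -- y is not isolated: every open neighborhood contains another point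
  have hne : ∀ N : Set X, IsOpen N → y ∈ N → ∃ z ∈ N, z ≠ y := by
    intro N hNo hyN
    by_contra hc
    push_neg at hc
    have hNy : N = {y} := by
      apply subset_antisymm
      · intro z hz; simpa using hc z hz
      · simpa using hyN
    exact h (hNy ▸ hNo)
  -- from any open M ∋ y, produce two disjoint nonempty punctured opens in M
  have pairM : ∀ M : Set X, IsOpen M → y ∈ M →
      ∃ V₁ V₂ : Set X, IsOpen V₁ ∧ V₁.Nonempty ∧ IsOpen V₂ ∧ V₂.Nonempty ∧
        Disjoint V₁ V₂ ∧ V₁ ⊆ M \ {y} ∧ V₂ ⊆ M \ {y} := by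
    intro M hMo hyM
    obtain ⟨z, hzM, hzy⟩ := hne M hMo hyM
    obtain ⟨A, B, hAo, hBo, hzA, hyB, hAB⟩ := t2_separation hzy
    obtain ⟨z₂, hz₂, hz₂y⟩ := hne (M ∩ B) (hMo.inter hBo) ⟨hyM, hyB⟩
    refine ⟨(M ∩ A) \ {y}, (M ∩ B) \ {y},
      (hMo.inter hAo).sdiff isClosed_singleton, ⟨z, ⟨⟨hzM, hzA⟩, by simpa using hzy⟩⟩,
      (hMo.inter hBo).sdiff isClosed_singleton, ⟨z₂, ⟨hz₂, by simpa using hz₂y⟩⟩,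
      ?_, ?_, ?_⟩
    · exact (hAB.mono (fun a ha => ha.1.2) (fun a ha => ha.1.2))
    · exact fun a ha => ⟨ha.1.1, ha.2⟩
    · exact fun a ha => ⟨ha.1.1, ha.2⟩
  -- Stage 1: x is periodic
  obtain ⟨V₁, V₂, h1o, h1n, h2o, h2n, hd, hs1, hs2⟩ := pairM W hWo hyW
  have hs1' : V₁ ⊆ f ⁻¹' {x} := fun a ha => (hs1 ha).1
  have hs2' : V₂ ⊆ f ⁻¹' {x} := fun a ha => (hs2 ha).1
  obtain ⟨n, hn⟩ := pair_lemma_17 f hTT x h1o h1n h2o h2n hd hs1' hs2'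
  have hper : f^[n + 1] x = x := by
    have hmem : f^[n] x ∈ W := by
      rcases hn with hn | hn
      · exact hs1' hn
      · exact hs2' hn
    simpa [Function.iterate_succ_apply', hWdef] using hmem
  set p := n + 1 with hpdef
  -- the forward orbit of x is finite
  set F : Set X := (fun j => f^[j] x) '' Iio p with hFdef
  have hFfin : F.Finite := (finite_Iio p).image _
  have hmemF : ∀ m : ℕ, f^[m] x ∈ F := by
    intro m
    induction m with
    | zero => exact ⟨0, Nat.succ_pos n, rfl⟩
    | succ m ih =>
        obtain ⟨j, hj, hjx⟩ := ih
        rw [mem_Iio] at hj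
        have hjx' : f^[j] x = f^[m] x := hjx
        have hstep : f^[j + 1] x = f^[m + 1] x := by
          rw [Function.iterate_succ_apply', Function.iterate_succ_apply', hjx']
        by_cases hjp : j + 1 < p
        · exact ⟨j + 1, mem_Iio.mpr hjp, hstep⟩
        · have hjp' : j + 1 = p := by omega
          refine ⟨0, mem_Iio.mpr (Nat.succ_pos n), ?_⟩
          show f^[0] x = f^[m + 1] x
          rw [← hstep, hjp', hper]
          simp
  -- Stage 2: find punctured opens avoiding the orbit, contradiction
  have hF'closed : IsClosed (F \ {y}) := (hFfin.subset diff_subset).isClosed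
  have hyM : y ∈ W ∩ (F \ {y})ᶜ := ⟨hyW, by simp⟩
  obtain ⟨U₁, U₂, g1o, g1n, g2o, g2n, gd, gs1, gs2⟩ :=
    pairM (W ∩ (F \ {y})ᶜ) (hWo.inter hF'closed.isOpen_compl) hyM
  have gsub : ∀ a, a ∈ (W ∩ (F \ {y})ᶜ) \ {y} → a ∈ f ⁻¹' {x} ∧ a ∉ F := by
    intro a ha
    refine ⟨ha.1.1, fun haF => ?_⟩
    have : a ≠ y := by simpa using ha.2
    exact ha.1.2 ⟨haF, this⟩
  obtain ⟨m, hm⟩ := pair_lemma_17 f hTT x g1o g1n g2o g2n gd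
    (fun a ha => (gsub a (gs1 ha)).1) (fun a ha => (gsub a (gs2 ha)).1)
  have : f^[m] x ∉ F := by
    rcases hm with hm | hm
    · exact (gsub _ (gs1 hm)).2
    · exact (gsub _ (gs2 hm)).2
  exact this (hmemF m)

/-- If `(X,f)` is topologically transitive and `x` is isolated, then every
point of the backward orbit of `x` is isolated; hence the set of isolated
points is open and −invariant. -/
theorem stmt_17 {X : Type*} [TopologicalSpace X] [T2Space X]
    (f : X → X) (hf : Continuous f)
    (hTT : ∀ U V : Set X, IsOpen U → U.Nonempty → IsOpen V → V.Nonempty →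
      ∃ k : ℕ, (f^[k] '' U ∩ V).Nonempty ∨ (f^[k] '' V ∩ U).Nonempty) :
    (∀ x : X, IsOpen ({x} : Set X) →
      ∀ k : ℕ, ∀ y ∈ f^[k] ⁻¹' {x}, IsOpen ({y} : Set X)) ∧
    IsOpen {y : X | IsOpen ({y} : Set X)} ∧
    f ⁻¹' {y : X | IsOpen ({y} : Set X)} ⊆ {y : X | IsOpen ({y} : Set X)} := by
  have main : ∀ x : X, IsOpen ({x} : Set X) →
      ∀ k : ℕ, ∀ y ∈ f^[k] ⁻¹' {x}, IsOpen ({y} : Set X) := by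
    intro x hx k
    induction k with
    | zero =>
        intro y hy
        have : y = x := by simpa using hy
        rwa [this]
    | succ k ih =>
        intro y hy
        have hfy : f y ∈ f^[k] ⁻¹' {x} := by
          simp only [mem_preimage, mem_singleton_iff] at hy ⊢
          rw [← Function.iterate_succ_apply]
          exact hy
        exact key_17 f hf hTT (f y) (ih (f y) hfy) y rfl
  refine ⟨main, ?_, ?_⟩
  · rw [isOpen_iff_mem_nhds]
    intro y hy
    exact mem_nhds_iff.mpr ⟨{y}, by intro z hz; rw [mem_singleton_iff] at hz; rwa [hz], hy, rfl⟩
  · intro y hy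
    exact key_17 f hf hTT (f y) hy y rfl
end

section
/- Let X be a perfect T₁ space. If (X,f) has a dense orbit sequence, then (X,f) satisfies TT₊: for all nonempty open U,V there is p ∈ ℕ with f^p(U) ∩ V ≠ ∅. -/
private lemma aux_int_19 {X : Type*} [TopologicalSpace X] [T1Space X]
    (hperf : ∀ x : X, ¬ IsOpen ({x} : Set X))
    (f : X → X) (hf : Continuous f)
    (x : ℤ → X) (hx : ∀ k, f (x k) = x (k + 1)) (hd : Dense (Set.range x))
    (U V : Set X) (hU : IsOpen U) (hUne : U.Nonempty) (hV : IsOpen V)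
    (hVne : V.Nonempty) : ∃ p : ℕ, (f^[p] '' U ∩ V).Nonempty := by
  have hiter : ∀ (k : ℤ) (p : ℕ), f^[p] (x k) = x (k + p) := by
    intro k p
    induction p with
    | zero => simp
    | succ p ih =>
        rw [Function.iterate_succ_apply', ih, hx]
        congr 1
        push_cast
        ring
  by_cases h : ∃ k m : ℤ, k ≤ m ∧ x k ∈ U ∧ x m ∈ V
  · obtain ⟨k, m, hkm, hkU, hmV⟩ := h
    refine ⟨(m - k).toNat, f^[(m - k).toNat] (x k), ⟨x k, hkU, rfl⟩, ?_⟩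
    have hkm' : k + ((m - k).toNat : ℤ) = m := by
      rw [Int.toNat_of_nonneg (by omega)]; ring
    rw [hiter, hkm']
    exact hmV
  · push_neg at h
    obtain ⟨_, ⟨k₁, rfl⟩, hk₁U⟩ := hd.exists_mem_open hU hUne
    obtain ⟨_, ⟨m₁, rfl⟩, hm₁V⟩ := hd.exists_mem_open hV hVne
    have hbddV : ∃ b : ℤ, ∀ z, x z ∈ V → z ≤ b := by
      refine ⟨k₁, fun z hz => ?_⟩
      by_contra hc
      exact h k₁ z (by omega) hk₁U hz
    have hbddU : ∃ b : ℤ, ∀ z, x z ∈ U → b ≤ z := by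
      refine ⟨m₁, fun z hz => ?_⟩
      by_contra hc
      exact h z m₁ (by omega) hz hm₁V
    obtain ⟨m₀, hm₀V, hm₀max⟩ := Int.exists_greatest_of_bdd hbddV ⟨m₁, hm₁V⟩
    obtain ⟨b, hb⟩ := hbddU
    obtain ⟨k₀, hk₀U, hk₀min⟩ := Int.exists_least_of_bdd ⟨b, hb⟩ ⟨k₁, hk₁U⟩
    have hlt : m₀ < k₀ := by
      by_contra hc
      exact h k₀ m₀ (by omega) hk₀U hm₀V
    set n : ℕ := (k₀ - m₀).toNat with hn
    have hmn : m₀ + (n : ℤ) = k₀ := by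
      rw [hn, Int.toNat_of_nonneg (by omega)]; ring
    set G : Set X := V ∩ f^[n] ⁻¹' U with hG
    have hGopen : IsOpen G := hV.inter (hU.preimage (hf.iterate n))
    have hm₀G : x m₀ ∈ G := by
      refine ⟨hm₀V, ?_⟩
      show f^[n] (x m₀) ∈ U
      rw [hiter, hmn]
      exact hk₀U
    have hG'open : IsOpen (G \ {x m₀}) := hGopen.sdiff isClosed_singleton
    have hG'ne : (G \ {x m₀}).Nonempty := by
      by_contra hc
      rw [Set.not_nonempty_iff_eq_empty, Set.diff_eq_empty] at hc
      have : G = {x m₀} := le_antisymm hc (by simpa using hm₀G)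
      exact hperf (x m₀) (this ▸ hGopen)
    obtain ⟨_, ⟨j, rfl⟩, hjG', hjne⟩ := hd.exists_mem_open hG'open hG'ne
    have hjV : j ≤ m₀ := hm₀max j hjG'.1
    have hjU : k₀ ≤ j + n := by
      have : f^[n] (x j) ∈ U := hjG'.2
      rw [hiter] at this
      exact hk₀min _ this
    have : j = m₀ := by omega
    exact (hjne (by simp [this])).elim

private lemma aux_nat_19 {X : Type*} [TopologicalSpace X] [T1Space X]
    (hperf : ∀ x : X, ¬ IsOpen ({x} : Set X))
    (f : X → X) (hf : Continuous f)
    (x : ℕ → X) (hx : ∀ k, f (x k) = x (k + 1)) (hd : Dense (Set.range x))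
    (U V : Set X) (hU : IsOpen U) (hUne : U.Nonempty) (hV : IsOpen V)
    (hVne : V.Nonempty) : ∃ p : ℕ, (f^[p] '' U ∩ V).Nonempty := by
  have hiter : ∀ (k p : ℕ), f^[p] (x k) = x (k + p) := by
    intro k p
    induction p with
    | zero => simp
    | succ p ih =>
        rw [Function.iterate_succ_apply', ih, hx]
        congr 1
  by_cases h : ∃ k m : ℕ, k ≤ m ∧ x k ∈ U ∧ x m ∈ V
  · obtain ⟨k, m, hkm, hkU, hmV⟩ := h
    refine ⟨m - k, f^[m - k] (x k), ⟨x k, hkU, rfl⟩, ?_⟩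
    rw [hiter, Nat.add_sub_cancel' hkm]
    exact hmV
  · push_neg at h
    obtain ⟨_, ⟨k₁, rfl⟩, hk₁U⟩ := hd.exists_mem_open hU hUne
    obtain ⟨_, ⟨m₁, rfl⟩, hm₁V⟩ := hd.exists_mem_open hV hVne
    set S : Set ℕ := {z | x z ∈ V} with hS
    set T : Set ℕ := {z | x z ∈ U} with hT
    have hbddV : ∀ z ∈ S, z ≤ k₁ := by
      intro z hz
      by_contra hc
      exact h k₁ z (by omega) hk₁U hz
    have hSne : S.Nonempty := ⟨m₁, hm₁V⟩
    have hSbdd : BddAbove S := ⟨k₁, hbddV⟩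
    set m₀ : ℕ := sSup S with hm₀
    have hm₀V : x m₀ ∈ V := Nat.sSup_mem hSne hSbdd
    have hm₀max : ∀ z, x z ∈ V → z ≤ m₀ := fun z hz => le_csSup hSbdd hz
    set k₀ : ℕ := sInf T with hk₀
    have hTne : T.Nonempty := ⟨k₁, show k₁ ∈ T from hk₁U⟩
    have hk₀U : x k₀ ∈ U := Nat.sInf_mem hTne
    have hk₀min : ∀ z, x z ∈ U → k₀ ≤ z := fun z hz => Nat.sInf_le (show z ∈ T from hz)
    have hlt : m₀ < k₀ := by
      by_contra hc
      exact h k₀ m₀ (by omega) hk₀U hm₀V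
    set n : ℕ := k₀ - m₀ with hn
    have hmn : m₀ + n = k₀ := by omega
    set G : Set X := V ∩ f^[n] ⁻¹' U with hG
    have hGopen : IsOpen G := hV.inter (hU.preimage (hf.iterate n))
    have hm₀G : x m₀ ∈ G := by
      refine ⟨hm₀V, ?_⟩
      show f^[n] (x m₀) ∈ U
      rw [hiter, hmn]
      exact hk₀U
    have hG'open : IsOpen (G \ {x m₀}) := hGopen.sdiff isClosed_singleton
    have hG'ne : (G \ {x m₀}).Nonempty := by
      by_contra hc
      rw [Set.not_nonempty_iff_eq_empty, Set.diff_eq_empty] at hc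
      have : G = {x m₀} := le_antisymm hc (by simpa using hm₀G)
      exact hperf (x m₀) (this ▸ hGopen)
    obtain ⟨_, ⟨j, rfl⟩, hjG', hjne⟩ := hd.exists_mem_open hG'open hG'ne
    have hjV : j ≤ m₀ := hm₀max j hjG'.1
    have hjU : k₀ ≤ j + n := by
      have : f^[n] (x j) ∈ U := hjG'.2
      rw [hiter] at this
      exact hk₀min _ this
    have : j = m₀ := by omega
    exact (hjne (by simp [this])).elim

/-- On a perfect T₁ space, a dense orbit sequence (bi-infinite, or forward
with no preimage of the initial point) implies TT₊. -/
theorem stmt_19 {X : Type*} [TopologicalSpace X] [T1Space X]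
    (hperf : ∀ x : X, ¬ IsOpen ({x} : Set X))
    (f : X → X) (hf : Continuous f)
    (hDO : (∃ x : ℤ → X, (∀ k, f (x k) = x (k + 1)) ∧ Dense (Set.range x)) ∨
      (∃ x : ℕ → X, (∀ k, f (x k) = x (k + 1)) ∧ f ⁻¹' {x 0} = ∅ ∧
        Dense (Set.range x))) :
    ∀ U V : Set X, IsOpen U → U.Nonempty → IsOpen V → V.Nonempty →
      ∃ p : ℕ, (f^[p] '' U ∩ V).Nonempty := by
  intro U V hU hUne hV hVne
  rcases hDO with ⟨x, hx, hd⟩ | ⟨x, hx, _, hd⟩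
  · exact aux_int_19 hperf f hf x hx hd U V hU hUne hV hVne
  · exact aux_nat_19 hperf f hf x hx hd U V hU hUne hV hVne
end
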